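/- For every natural number n ≥ 1, there exists a coarse embedding of the space 𝒢ℋ^{≤n} of isometry classes of nonempty metric spaces with at most n points, endowed with the Gromov–Hausdorff distance, into the Hilbert space ℓ² of square-summable real sequences. -/

import Mathlib

open Filter

/-- A coarse embedding between (pseudo)metric spaces: there are control functions
`ρ₋, ρ₊` with `ρ₋(t) → ∞` and `ρ₋(d(x,y)) ≤ d(ψ x, ψ y) ≤ ρ₊(d(x,y))` for all `x, y`. -/
def CoarseEmbedding {X Y : Type*} [PseudoMetricSpace X] [PseudoMetricSpace Y]
    (ψ : X → Y) : Prop :=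
  ∃ ρminus ρplus : ℝ → ℝ, Tendsto ρminus atTop atTop ∧
    ∀ x y : X, ρminus (dist x y) ≤ dist (ψ x) (ψ y) ∧ dist (ψ x) (ψ y) ≤ ρplus (dist x y)

namespace GHEmbedAux

open Metric Set GromovHausdorff
open scoped ENNReal NNReal


/-- Index type for the augmented distance-matrix invariant. -/
abbrev Idx (n : ℕ) := (Fin n × Fin n) ⊕ Unit

/-- The ambient space of augmented distance matrices, with the sup metric. -/
abbrev E (n : ℕ) := Idx n → ℝ

/-- Covering radius of a tuple: Hausdorff distance from the whole space to its image. -/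
noncomputable def covRad {n : ℕ} {X : Type*} [MetricSpace X] (u : Fin n → X) : ℝ :=
  hausdorffDist (Set.univ : Set X) (Set.range u)

/-- The augmented distance matrix of a tuple. -/
noncomputable def mat {n : ℕ} {X : Type*} [MetricSpace X] (u : Fin n → X) : E n :=
  Sum.elim (fun ij => dist (u ij.1) (u ij.2)) (fun _ => covRad u)

/-- The invariant: the set of augmented distance matrices of all `n`-tuples. -/
noncomputable def KSet (n : ℕ) (X : Type*) [MetricSpace X] : Set (E n) :=
  Set.range (fun u : Fin n → X => mat u)

lemma covRad_nonneg {n : ℕ} {X : Type*} [MetricSpace X] (u : Fin n → X) : 0 ≤ covRad u :=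
  hausdorffDist_nonneg

lemma dist_dist_le {Z : Type*} [PseudoMetricSpace Z] (a b c d : Z) :
    |dist a b - dist c d| ≤ dist a c + dist b d := by
  rw [abs_sub_le_iff]
  constructor
  · have h := dist_triangle4 a c d b
    have h2 := dist_comm d b
    have h3 := dist_comm b d
    linarith [dist_comm c d]
  · have h := dist_triangle4 c a b d
    linarith [dist_comm c a, dist_comm a c]

lemma exists_close_in_tuple {n : ℕ} (hn : 0 < n) {X : Type*} [MetricSpace X]
    [CompactSpace X] [Nonempty X] (u : Fin n → X) (x : X) :
    ∃ i, dist x (u i) ≤ covRad u := by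
  haveI : Nonempty (Fin n) := ⟨⟨0, hn⟩⟩
  have hne : (Set.range u).Nonempty := range_nonempty u
  have hcp : IsCompact (Set.range u) := (finite_range u).isCompact
  obtain ⟨z, hz, hdz⟩ := hcp.exists_infDist_eq_dist hne x
  obtain ⟨i, rfl⟩ := hz
  refine ⟨i, ?_⟩
  rw [← hdz]
  exact infDist_le_hausdorffDist_of_mem (mem_univ x)
    (hausdorffEdist_ne_top_of_nonempty_of_bounded univ_nonempty hne
      isCompact_univ.isBounded hcp.isBounded)

lemma dist_mat_le {n : ℕ} (hn : 0 < n) {X Y Z : Type*} [MetricSpace X] [CompactSpace X]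
    [Nonempty X] [MetricSpace Y] [CompactSpace Y] [Nonempty Y] [PseudoMetricSpace Z]
    (jl : X → Z) (jr : Y → Z) (hjl : Isometry jl) (hjr : Isometry jr) {ε : ℝ}
    (Φ : X → Y) (Ψ : Y → X)
    (hΦ : ∀ x, dist (jl x) (jr (Φ x)) ≤ ε) (hΨ : ∀ y, dist (jr y) (jl (Ψ y)) ≤ ε)
    (u : Fin n → X) : dist (mat u) (mat (Φ ∘ u)) ≤ 2 * ε := by
  have hε : 0 ≤ ε := le_trans dist_nonneg (hΦ (Classical.arbitrary X))
  rw [dist_pi_le_iff (by linarith)]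
  intro l
  rcases l with ⟨i, j⟩ | _
  · show dist (dist (u i) (u j)) (dist (Φ (u i)) (Φ (u j))) ≤ 2 * ε
    rw [Real.dist_eq]
    calc |dist (u i) (u j) - dist (Φ (u i)) (Φ (u j))|
        = |dist (jl (u i)) (jl (u j)) - dist (jr (Φ (u i))) (jr (Φ (u j)))| := by
          rw [hjl.dist_eq, hjr.dist_eq]
      _ ≤ dist (jl (u i)) (jr (Φ (u i))) + dist (jl (u j)) (jr (Φ (u j))) :=
          dist_dist_le _ _ _ _
      _ ≤ ε + ε := add_le_add (hΦ _) (hΦ _)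
      _ = 2 * ε := by ring
  · show dist (covRad u) (covRad (Φ ∘ u)) ≤ 2 * ε
    have bound1 : covRad (Φ ∘ u) ≤ covRad u + 2 * ε := by
      apply hausdorffDist_le_of_infDist (by linarith [covRad_nonneg u])
      · intro y _
        obtain ⟨i, hi⟩ := exists_close_in_tuple hn u (Ψ y)
        have hmem : Φ (u i) ∈ Set.range (Φ ∘ u) := ⟨i, rfl⟩
        calc infDist y (Set.range (Φ ∘ u)) ≤ dist y (Φ (u i)) := infDist_le_dist_of_mem hmem
          _ = dist (jr y) (jr (Φ (u i))) := (hjr.dist_eq _ _).symm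
          _ ≤ dist (jr y) (jl (Ψ y)) + dist (jl (Ψ y)) (jl (u i))
              + dist (jl (u i)) (jr (Φ (u i))) := dist_triangle4 _ _ _ _
          _ ≤ ε + covRad u + ε := by
              refine add_le_add (add_le_add (hΨ y) ?_) (hΦ _)
              rw [hjl.dist_eq]; exact hi
          _ = covRad u + 2 * ε := by ring
      · intro p _
        have : infDist p (Set.univ : Set Y) ≤ dist p p := infDist_le_dist_of_mem (mem_univ p)
        simp only [dist_self] at this
        linarith [covRad_nonneg u]
    have bound2 : covRad u ≤ covRad (Φ ∘ u) + 2 * ε := by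
      apply hausdorffDist_le_of_infDist (by linarith [covRad_nonneg (Φ ∘ u)])
      · intro x _
        obtain ⟨i, hi⟩ := exists_close_in_tuple hn (Φ ∘ u) (Φ x)
        calc infDist x (Set.range u) ≤ dist x (u i) := infDist_le_dist_of_mem ⟨i, rfl⟩
          _ = dist (jl x) (jl (u i)) := (hjl.dist_eq _ _).symm
          _ ≤ dist (jl x) (jr (Φ x)) + dist (jr (Φ x)) (jr (Φ (u i)))
              + dist (jr (Φ (u i))) (jl (u i)) := dist_triangle4 _ _ _ _
          _ ≤ ε + covRad (Φ ∘ u) + ε := by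
              refine add_le_add (add_le_add (hΦ x) ?_) ?_
              · rw [hjr.dist_eq]; exact hi
              · rw [dist_comm]; exact hΦ _
          _ = covRad (Φ ∘ u) + 2 * ε := by ring
      · intro p _
        have : infDist p (Set.univ : Set X) ≤ dist p p := infDist_le_dist_of_mem (mem_univ p)
        simp only [dist_self] at this
        linarith [covRad_nonneg (Φ ∘ u)]
    rw [Real.dist_eq, abs_sub_le_iff]
    constructor <;> linarith


lemma mat_mem_closedBall {n : ℕ} (hn : 0 < n) {X : Type*} [MetricSpace X] [CompactSpace X]
    [Nonempty X] (u : Fin n → X) :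
    mat u ∈ Metric.closedBall (0 : E n) (Metric.diam (Set.univ : Set X)) := by
  haveI : Nonempty (Fin n) := ⟨⟨0, hn⟩⟩
  rw [Metric.mem_closedBall, dist_pi_le_iff Metric.diam_nonneg]
  intro l
  have hb : Bornology.IsBounded (Set.univ : Set X) := isCompact_univ.isBounded
  rcases l with ⟨i, j⟩ | _
  · show dist (dist (u i) (u j)) (0 : ℝ) ≤ _
    rw [Real.dist_eq, sub_zero, abs_of_nonneg dist_nonneg]
    exact dist_le_diam_of_mem hb (mem_univ _) (mem_univ _)
  · show dist (covRad u) (0 : ℝ) ≤ _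
    rw [Real.dist_eq, sub_zero, abs_of_nonneg (covRad_nonneg u)]
    apply hausdorffDist_le_of_infDist Metric.diam_nonneg
    · intro x _
      calc infDist x (Set.range u) ≤ dist x (u (Classical.arbitrary (Fin n))) :=
            infDist_le_dist_of_mem (mem_range_self _)
        _ ≤ Metric.diam (Set.univ : Set X) := dist_le_diam_of_mem hb (mem_univ _) (mem_univ _)
    · intro p _
      have : infDist p (Set.univ : Set X) ≤ dist p p := infDist_le_dist_of_mem (mem_univ p)
      simp only [dist_self] at this
      linarith [Metric.diam_nonneg (s := (Set.univ : Set X))]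

lemma KSet_nonempty (n : ℕ) (X : Type*) [MetricSpace X] [Nonempty X] :
    (KSet n X).Nonempty :=
  ⟨mat (fun _ => Classical.arbitrary X), ⟨_, rfl⟩⟩

lemma KSet_bounded {n : ℕ} (hn : 0 < n) (X : Type*) [MetricSpace X] [CompactSpace X]
    [Nonempty X] : Bornology.IsBounded (KSet n X) := by
  apply (Metric.isBounded_closedBall
    (x := (0 : E n)) (r := Metric.diam (Set.univ : Set X))).subset
  rintro A ⟨u, rfl⟩
  exact mat_mem_closedBall hn u

/-- Upper estimate: the invariant is `2`-Lipschitz for the GH distance. -/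
theorem hausdorffDist_KSet_le {n : ℕ} (hn : 0 < n) (X : Type*) (Y : Type*) [MetricSpace X]
    [CompactSpace X] [Nonempty X] [MetricSpace Y] [CompactSpace Y] [Nonempty Y] :
    hausdorffDist (KSet n X) (KSet n Y) ≤ 2 * ghDist X Y := by
  set ε := ghDist X Y with hε
  have hjl := isometry_optimalGHInjl X Y
  have hjr := isometry_optimalGHInjr X Y
  set jl := optimalGHInjl X Y
  set jr := optimalGHInjr X Y
  have hopt : hausdorffDist (Set.range jl) (Set.range jr) = ε := hausdorffDist_optimal (X := X) (Y := Y)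
  have hfin : EMetric.hausdorffEdist (Set.range jl) (Set.range jr) ≠ ⊤ :=
    hausdorffEdist_ne_top_of_nonempty_of_bounded (range_nonempty _) (range_nonempty _)
      (isCompact_range hjl.continuous).isBounded (isCompact_range hjr.continuous).isBounded
  have hΦex : ∀ x : X, ∃ y : Y, dist (jl x) (jr y) ≤ ε := by
    intro x
    obtain ⟨z, hz, hdz⟩ := (isCompact_range hjr.continuous).exists_infDist_eq_dist
      (range_nonempty jr) (jl x)
    obtain ⟨y, rfl⟩ := hz
    refine ⟨y, ?_⟩
    rw [← hdz, ← hopt]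
    exact infDist_le_hausdorffDist_of_mem (mem_range_self x) hfin
  have hΨex : ∀ y : Y, ∃ x : X, dist (jr y) (jl x) ≤ ε := by
    intro y
    obtain ⟨z, hz, hdz⟩ := (isCompact_range hjl.continuous).exists_infDist_eq_dist
      (range_nonempty jl) (jr y)
    obtain ⟨x, rfl⟩ := hz
    refine ⟨x, ?_⟩
    rw [← hdz, ← hopt, hausdorffDist_comm]
    exact infDist_le_hausdorffDist_of_mem (mem_range_self y)
      (by rw [EMetric.hausdorffEdist_comm]; exact hfin)
  choose Φ hΦ using hΦex
  choose Ψ hΨ using hΨex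
  have hε0 : 0 ≤ ε := le_trans dist_nonneg (hΦ (Classical.arbitrary X))
  apply hausdorffDist_le_of_mem_dist (by linarith)
  · rintro A ⟨u, rfl⟩
    exact ⟨mat (Φ ∘ u), ⟨Φ ∘ u, rfl⟩, dist_mat_le hn jl jr hjl hjr Φ Ψ hΦ hΨ u⟩
  · rintro B ⟨v, rfl⟩
    exact ⟨mat (Ψ ∘ v), ⟨Ψ ∘ v, rfl⟩, dist_mat_le hn jr jl hjr hjl Ψ Φ hΨ hΦ v⟩


/-- Lower estimate: the GH distance is controlled by the Hausdorff distance of invariants. -/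
theorem ghDist_le_KSet {n : ℕ} (hn : 0 < n) (X : Type*) (Y : Type*) [MetricSpace X]
    [CompactSpace X] [Nonempty X] [MetricSpace Y] [CompactSpace Y] [Nonempty Y]
    [Finite X] (hcard : Nat.card X ≤ n) {s : ℝ}
    (hs : hausdorffDist (KSet n X) (KSet n Y) < s) :
    ghDist X Y ≤ 5 / 2 * s := by
  classical
  haveI : Nonempty (Fin n) := ⟨⟨0, hn⟩⟩
  haveI : Fintype X := Fintype.ofFinite X
  have hk : 0 < Fintype.card X := Fintype.card_pos
  have hkn : Fintype.card X ≤ n := by rwa [← Nat.card_eq_fintype_card]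
  set e := Fintype.equivFin X with he
  set ustar : Fin n → X := fun i => e.symm ⟨i.val % Fintype.card X, Nat.mod_lt _ hk⟩
    with hustar
  have hsurj : Function.Surjective ustar := by
    intro x
    refine ⟨⟨(e x).val, lt_of_lt_of_le (e x).isLt hkn⟩, ?_⟩
    have : (e x).val % Fintype.card X = (e x).val := Nat.mod_eq_of_lt (e x).isLt
    simp only [hustar]
    rw [show (⟨(e x).val % Fintype.card X, Nat.mod_lt _ hk⟩ : Fin (Fintype.card X)) = e x from
      Fin.ext this]
    exact e.symm_apply_apply x
  have hcov0 : covRad ustar = 0 := by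
    unfold covRad
    rw [Set.range_eq_univ.mpr hsurj]
    exact hausdorffDist_self_zero
  -- find a close matrix in `KSet n Y`
  have hfinE : EMetric.hausdorffEdist (KSet n X) (KSet n Y) ≠ ⊤ :=
    hausdorffEdist_ne_top_of_nonempty_of_bounded (KSet_nonempty n X) (KSet_nonempty n Y)
      (KSet_bounded hn X) (KSet_bounded hn Y)
  have hinf : infDist (mat ustar) (KSet n Y) < s :=
    lt_of_le_of_lt (infDist_le_hausdorffDist_of_mem (show mat ustar ∈ KSet n X from ⟨ustar, rfl⟩) hfinE) hs
  obtain ⟨B, hB, hdB⟩ := (infDist_lt_iff (KSet_nonempty n Y)).mp hinf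
  obtain ⟨v, rfl⟩ := hB
  have hcoord : ∀ l, dist (mat ustar l) (mat v l) < s :=
    fun l => lt_of_le_of_lt (dist_le_pi_dist _ _ l) hdB
  have hcov : covRad v < s := by
    have h := hcoord (Sum.inr ())
    have h2 : dist (covRad ustar) (covRad v) < s := h
    rw [Real.dist_eq, hcov0, zero_sub, abs_neg, abs_of_nonneg (covRad_nonneg v)] at h2
    exact h2
  have hs0 : 0 ≤ s := le_trans (covRad_nonneg v) hcov.le
  -- section of ustar
  have hσ : ∀ x : X, ustar (Classical.choose (hsurj x)) = x :=
    fun x => Classical.choose_spec (hsurj x)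
  set σ : X → Fin n := fun x => Classical.choose (hsurj x) with hσdef
  -- apply the approximation lemma
  have key := ghDist_le_of_approx_subsets (X := X) (Y := Y) (s := (Set.univ : Set X))
    (Φ := fun x => v (σ (x : X))) (ε₁ := 0) (ε₂ := s) (ε₃ := 2 * s)
    (fun x => ⟨x, mem_univ x, by simp⟩)
    (by
      intro y
      have hinfy : infDist y (Set.range v) ≤ covRad v :=
        infDist_le_hausdorffDist_of_mem (mem_univ y)
          (hausdorffEdist_ne_top_of_nonempty_of_bounded univ_nonempty (range_nonempty v)
            isCompact_univ.isBounded ((finite_range v).isCompact).isBounded)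
      obtain ⟨w, hw, hwd⟩ := (infDist_lt_iff (range_nonempty v)).mp (lt_of_le_of_lt hinfy hcov)
      obtain ⟨i, rfl⟩ := hw
      refine ⟨⟨ustar i, mem_univ _⟩, ?_⟩
      have h2 := hcoord (Sum.inl (σ (ustar i), i))
      have h3 : dist (dist (ustar (σ (ustar i))) (ustar i)) (dist (v (σ (ustar i))) (v i)) < s :=
        h2
      rw [hσ (ustar i), dist_self, Real.dist_eq, zero_sub, abs_neg,
        abs_of_nonneg dist_nonneg] at h3
      calc dist y (v (σ (ustar i))) ≤ dist y (v i) + dist (v i) (v (σ (ustar i))) :=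
            dist_triangle _ _ _
        _ ≤ s + s := add_le_add hwd.le (by rw [dist_comm]; exact h3.le)
        _ = 2 * s := by ring)
    (by
      intro x y
      have h2 := hcoord (Sum.inl (σ (x : X), σ (y : X)))
      have h3 : dist (dist (ustar (σ (x : X))) (ustar (σ (y : X))))
          (dist (v (σ (x : X))) (v (σ (y : X)))) < s := h2
      rw [hσ, hσ, Real.dist_eq] at h3
      rw [Subtype.dist_eq]
      exact h3.le)
  linarith

/-- Lower estimate, clean form. -/
theorem ghDist_le_KSet' {n : ℕ} (hn : 0 < n) (X : Type*) (Y : Type*) [MetricSpace X]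
    [CompactSpace X] [Nonempty X] [MetricSpace Y] [CompactSpace Y] [Nonempty Y]
    [Finite X] (hcard : Nat.card X ≤ n) :
    ghDist X Y ≤ 5 / 2 * hausdorffDist (KSet n X) (KSet n Y) := by
  refine le_of_forall_pos_le_add fun δ hδ => ?_
  have h := ghDist_le_KSet hn X Y hcard
    (s := hausdorffDist (KSet n X) (KSet n Y) + 2 / 5 * δ)
    (lt_add_of_pos_right _ (by linarith))
  linarith


/-! ### The multiscale lattice feature map on finite subsets of `E n` -/

/-- Lattice point at scale `2^j`. -/
noncomputable def latpt (n : ℕ) (j : ℕ) (z : Idx n → ℤ) : E n := fun i => (2:ℝ)^j * (z i : ℝ)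

/-- Feature of a set at a scale/lattice-point coordinate. -/
noncomputable def feat (n : ℕ) (A : Set (E n)) (c : ℕ × (Idx n → ℤ)) : ℝ :=
  ((2:ℝ)^c.1)⁻¹ * max 0 ((2:ℝ)^c.1 - infDist (latpt n c.1 c.2) A)

lemma feat_nonneg {n : ℕ} (A : Set (E n)) (c : ℕ × (Idx n → ℤ)) : 0 ≤ feat n A c :=
  mul_nonneg (inv_nonneg.mpr (by positivity)) (le_max_left _ _)

lemma feat_le_one {n : ℕ} (A : Set (E n)) (c : ℕ × (Idx n → ℤ)) : feat n A c ≤ 1 := by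
  have h2 : (0:ℝ) < (2:ℝ)^c.1 := by positivity
  have : max 0 ((2:ℝ)^c.1 - infDist (latpt n c.1 c.2) A) ≤ (2:ℝ)^c.1 :=
    max_le h2.le (by linarith [infDist_nonneg (s := A) (x := latpt n c.1 c.2)])
  calc feat n A c ≤ ((2:ℝ)^c.1)⁻¹ * (2:ℝ)^c.1 :=
        mul_le_mul_of_nonneg_left this (inv_nonneg.mpr h2.le)
    _ = 1 := inv_mul_cancel₀ h2.ne'

lemma feat_diff_le {n : ℕ} {A B : Set (E n)}
    (hfin : EMetric.hausdorffEdist A B ≠ ⊤) (c : ℕ × (Idx n → ℤ)) :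
    |feat n A c - feat n B c| ≤ ((2:ℝ)^c.1)⁻¹ * hausdorffDist A B := by
  have h2 : (0:ℝ) < (2:ℝ)^c.1 := by positivity
  set a := infDist (latpt n c.1 c.2) A
  set b := infDist (latpt n c.1 c.2) B
  have hab : |a - b| ≤ hausdorffDist A B := by
    rw [abs_sub_le_iff]
    constructor
    · have := infDist_le_infDist_add_hausdorffDist (x := latpt n c.1 c.2) (s := B) (t := A)
        (by rw [EMetric.hausdorffEdist_comm]; exact hfin)
      rw [hausdorffDist_comm] at this
      linarith
    · have := infDist_le_infDist_add_hausdorffDist (x := latpt n c.1 c.2) (s := A) (t := B) hfin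
      linarith
  have hmax : |max 0 ((2:ℝ)^c.1 - a) - max 0 ((2:ℝ)^c.1 - b)| ≤ |a - b| := by
    rw [max_comm 0 ((2:ℝ)^c.1 - a), max_comm 0 ((2:ℝ)^c.1 - b)]
    calc |max ((2:ℝ)^c.1 - a) 0 - max ((2:ℝ)^c.1 - b) 0| ≤ |((2:ℝ)^c.1 - a) - ((2:ℝ)^c.1 - b)| :=
          abs_max_sub_max_le_abs _ _ _
      _ = |b - a| := by ring_nf
      _ = |a - b| := abs_sub_comm _ _
  calc |feat n A c - feat n B c|
      = ((2:ℝ)^c.1)⁻¹ * |max 0 ((2:ℝ)^c.1 - a) - max 0 ((2:ℝ)^c.1 - b)| := by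
        rw [feat, feat, ← mul_sub, abs_mul, abs_of_nonneg (inv_nonneg.mpr h2.le)]
    _ ≤ ((2:ℝ)^c.1)⁻¹ * hausdorffDist A B :=
        mul_le_mul_of_nonneg_left (le_trans hmax hab) (inv_nonneg.mpr h2.le)

lemma feat_support {n : ℕ} {A : Set (E n)} (hA : A.Nonempty) {j : ℕ} {z : Idx n → ℤ}
    (h : feat n A (j, z) ≠ 0) : ∃ a ∈ A, dist (latpt n j z) a < (2:ℝ)^j := by
  have h2 : (0:ℝ) < (2:ℝ)^j := by positivity
  have hlt : infDist (latpt n j z) A < (2:ℝ)^j := by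
    by_contra hcon
    push_neg at hcon
    apply h
    rw [feat]
    simp only
    rw [max_eq_left (by linarith : (2:ℝ)^j - infDist (latpt n j z) A ≤ 0), mul_zero]
  exact (infDist_lt_iff hA).mp hlt

/-- The lattice neighborhood of a point: all lattice points within `2^j` in sup metric. -/
noncomputable def nbhd (n : ℕ) (j : ℕ) (a : E n) : Finset (Idx n → ℤ) := by
  classical
  exact Finset.image
    (fun (ε : Idx n → Fin 3) (i : Idx n) => round (a i / (2:ℝ)^j) + (ε i : ℤ) - 1) Finset.univ

lemma card_nbhd (n : ℕ) (j : ℕ) (a : E n) : (nbhd n j a).card ≤ 3 ^ (n * n + 1) := by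
  classical
  rw [nbhd]
  refine le_trans Finset.card_image_le ?_
  rw [Finset.card_univ, Fintype.card_fun]
  have : Fintype.card (Idx n) = n * n + 1 := by
    simp [Idx, Fintype.card_sum, Fintype.card_prod]
  rw [this]
  norm_num

lemma mem_nbhd {n : ℕ} {j : ℕ} {a : E n} {z : Idx n → ℤ}
    (h : dist (latpt n j z) a < (2:ℝ)^j) : z ∈ nbhd n j a := by
  classical
  have h2 : (0:ℝ) < (2:ℝ)^j := by positivity
  have hint : ∀ i : Idx n, |z i - round (a i / (2:ℝ)^j)| ≤ 1 := by
    intro i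
    have h1 : |(2:ℝ)^j * (z i : ℝ) - a i| < (2:ℝ)^j := by
      have := dist_le_pi_dist (latpt n j z) a i
      rw [Real.dist_eq] at this
      exact lt_of_le_of_lt this h
    have h1' : |(z i : ℝ) - a i / (2:ℝ)^j| < 1 := by
      have heq : (z i : ℝ) - a i / (2:ℝ)^j = ((2:ℝ)^j * (z i : ℝ) - a i) / (2:ℝ)^j := by
        field_simp
      rw [heq, abs_div, abs_of_pos h2, div_lt_one h2]
      exact h1
    have h3 : |(round (a i / (2:ℝ)^j) : ℝ) - a i / (2:ℝ)^j| ≤ 1/2 := by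
      rw [abs_sub_comm]; exact abs_sub_round _
    have hR : |((z i : ℤ) : ℝ) - ((round (a i / (2:ℝ)^j) : ℤ) : ℝ)| < 2 := by
      calc |((z i : ℤ) : ℝ) - ((round (a i / (2:ℝ)^j) : ℤ) : ℝ)|
          ≤ |(z i : ℝ) - a i / (2:ℝ)^j| + |a i / (2:ℝ)^j - (round (a i / (2:ℝ)^j) : ℝ)| :=
            abs_sub_le _ _ _
        _ < 1 + 1/2 := add_lt_add_of_lt_of_le h1' (by rw [abs_sub_comm]; exact h3)
        _ < 2 := by norm_num
    have : |z i - round (a i / (2:ℝ)^j)| < 2 := by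
      have := hR
      rw [← Int.cast_sub, ← Int.cast_abs] at this
      exact_mod_cast this
    omega
  rw [nbhd]
  refine Finset.mem_image.mpr
    ⟨fun i => ⟨(z i - round (a i / (2:ℝ)^j) + 1).toNat, by
        have := abs_le.mp (hint i); omega⟩,
      Finset.mem_univ _, ?_⟩
  funext i
  have := abs_le.mp (hint i)
  simp only [Fin.val_mk]
  omega


/-- The squared feature difference. -/
noncomputable def gfun (n : ℕ) (A B : Set (E n)) (c : ℕ × (Idx n → ℤ)) : ℝ :=
  (feat n A c - feat n B c)^2

lemma gfun_nonneg {n : ℕ} (A B : Set (E n)) (c : ℕ × (Idx n → ℤ)) : 0 ≤ gfun n A B c :=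
  sq_nonneg _

lemma gfun_comm {n : ℕ} (A B : Set (E n)) (c : ℕ × (Idx n → ℤ)) :
    gfun n A B c = gfun n B A c := by
  rw [gfun, gfun]; ring

lemma gfun_supp {n : ℕ} {A B : Finset (E n)} (hA : A.Nonempty) (hB : B.Nonempty)
    (j : ℕ) (z : Idx n → ℤ) (hz : z ∉ (A ∪ B).biUnion (nbhd n j)) :
    gfun n ↑A ↑B (j, z) = 0 := by
  classical
  by_contra hcon
  have hone : feat n ↑A (j, z) ≠ 0 ∨ feat n ↑B (j, z) ≠ 0 := by
    by_contra hno
    push_neg at hno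
    exact hcon (by rw [gfun, hno.1, hno.2, sub_zero]; norm_num)
  apply hz
  rcases hone with h | h
  · obtain ⟨a, ha, had⟩ := feat_support (Finset.coe_nonempty.mpr hA) h
    exact Finset.mem_biUnion.mpr ⟨a, Finset.mem_union_left _ ha, mem_nbhd had⟩
  · obtain ⟨b, hb, hbd⟩ := feat_support (Finset.coe_nonempty.mpr hB) h
    exact Finset.mem_biUnion.mpr ⟨b, Finset.mem_union_right _ hb, mem_nbhd hbd⟩

lemma gfun_le {n : ℕ} {A B : Finset (E n)} (hA : A.Nonempty) (hB : B.Nonempty)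
    (c : ℕ × (Idx n → ℤ)) :
    gfun n ↑A ↑B c ≤ hausdorffDist (↑A : Set (E n)) ↑B * ((1:ℝ)/2)^c.1 := by
  have hfin : EMetric.hausdorffEdist (↑A : Set (E n)) ↑B ≠ ⊤ :=
    hausdorffEdist_ne_top_of_nonempty_of_bounded (Finset.coe_nonempty.mpr hA)
      (Finset.coe_nonempty.mpr hB) A.finite_toSet.isBounded B.finite_toSet.isBounded
  have h2 : (0:ℝ) < (2:ℝ)^c.1 := by positivity
  have habs : |feat n ↑A c - feat n ↑B c| ≤ 1 := by
    rw [abs_le]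
    constructor
    · linarith [feat_le_one (↑B : Set (E n)) c, feat_nonneg (↑A : Set (E n)) c]
    · linarith [feat_le_one (↑A : Set (E n)) c, feat_nonneg (↑B : Set (E n)) c]
  calc gfun n ↑A ↑B c = |feat n ↑A c - feat n ↑B c| * |feat n ↑A c - feat n ↑B c| := by
        rw [gfun, ← sq_abs, sq]
    _ ≤ (((2:ℝ)^c.1)⁻¹ * hausdorffDist (↑A : Set (E n)) ↑B) * 1 :=
        mul_le_mul (feat_diff_le hfin c) habs (abs_nonneg _)
          (mul_nonneg (inv_nonneg.mpr h2.le) hausdorffDist_nonneg)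
    _ = hausdorffDist (↑A : Set (E n)) ↑B * ((1:ℝ)/2)^c.1 := by
        rw [one_div, inv_pow]; ring

theorem gfun_summable_and_bound {n : ℕ} (A B : Finset (E n)) (hA : A.Nonempty)
    (hB : B.Nonempty) :
    Summable (gfun n ↑A ↑B) ∧
      ∑' c, gfun n ↑A ↑B c ≤
        (((A.card + B.card) * 3^(n*n+1) : ℕ) : ℝ) *
          hausdorffDist (↑A : Set (E n)) ↑B * 2 := by
  classical
  set δ := hausdorffDist (↑A : Set (E n)) ↑B with hδdef
  have hδ0 : 0 ≤ δ := hausdorffDist_nonneg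
  set C : ℝ := (((A.card + B.card) * 3^(n*n+1) : ℕ) : ℝ) with hCdef
  have hTcard : ∀ j : ℕ, (((A ∪ B).biUnion (nbhd n j)).card : ℝ) ≤ C := by
    intro j
    rw [hCdef]
    refine Nat.cast_le.mpr (le_trans Finset.card_biUnion_le ?_)
    calc ∑ a ∈ A ∪ B, (nbhd n j a).card ≤ (A ∪ B).card • (3^(n*n+1)) :=
          Finset.sum_le_card_nsmul _ _ _ (fun a _ => card_nbhd n j a)
      _ = (A ∪ B).card * 3^(n*n+1) := smul_eq_mul _ _
      _ ≤ (A.card + B.card) * 3^(n*n+1) :=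
          Nat.mul_le_mul_right _ (Finset.card_union_le A B)
  have hz := fun j => gfun_supp hA hB j
  have hsummz : ∀ j, Summable (fun z => gfun n ↑A ↑B (j, z)) :=
    fun j => summable_of_ne_finset_zero (hz j)
  have htz : ∀ j : ℕ, (∑' z, gfun n ↑A ↑B (j, z)) ≤ C * δ * ((1:ℝ)/2)^j := by
    intro j
    rw [tsum_eq_sum (hz j)]
    calc ∑ z ∈ (A ∪ B).biUnion (nbhd n j), gfun n ↑A ↑B (j, z)
        ≤ ((A ∪ B).biUnion (nbhd n j)).card • (δ * ((1:ℝ)/2)^j) :=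
          Finset.sum_le_card_nsmul _ _ _ (fun z _ => gfun_le hA hB (j, z))
      _ = (((A ∪ B).biUnion (nbhd n j)).card : ℝ) * (δ * ((1:ℝ)/2)^j) :=
          nsmul_eq_mul _ _
      _ ≤ C * (δ * ((1:ℝ)/2)^j) :=
          mul_le_mul_of_nonneg_right (hTcard j) (by positivity)
      _ = C * δ * ((1:ℝ)/2)^j := by ring
  have hnn : ∀ c, 0 ≤ gfun n (↑A : Set (E n)) ↑B c := gfun_nonneg _ _
  have hsumgeo : Summable (fun j : ℕ => C * δ * ((1:ℝ)/2)^j) :=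
    summable_geometric_two.mul_left (C * δ)
  have hsumj : Summable (fun j : ℕ => ∑' z, gfun n ↑A ↑B (j, z)) :=
    Summable.of_nonneg_of_le (fun j => tsum_nonneg (fun z => hnn _)) htz hsumgeo
  have hsum : Summable (gfun n ↑A ↑B) :=
    (summable_prod_of_nonneg hnn).mpr ⟨hsummz, hsumj⟩
  refine ⟨hsum, ?_⟩
  calc ∑' c, gfun n ↑A ↑B c = ∑' j, ∑' z, gfun n ↑A ↑B (j, z) := Summable.tsum_prod' hsum hsummz
    _ ≤ ∑' j : ℕ, C * δ * ((1:ℝ)/2)^j := Summable.tsum_le_tsum htz hsumj hsumgeo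
    _ = C * δ * ∑' j : ℕ, ((1:ℝ)/2)^j := tsum_mul_left
    _ = C * δ * 2 := by rw [tsum_geometric_two]

lemma feat_far {n j : ℕ} {A B : Set (E n)} {a : E n} (ha : a ∈ A)
    (hfar : (2:ℝ)^(j+2) < infDist a B) :
    ∃ z, (1:ℝ)/4 ≤ gfun n A B (j, z) := by
  have h2 : (0:ℝ) < (2:ℝ)^j := by positivity
  set z := fun i : Idx n => round (a i / (2:ℝ)^j) with hzdef
  have hd : dist (latpt n j z) a ≤ (2:ℝ)^j / 2 := by
    rw [dist_pi_le_iff (by positivity)]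
    intro i
    rw [Real.dist_eq]
    have heq : latpt n j z i - a i
        = (2:ℝ)^j * ((round (a i / (2:ℝ)^j) : ℝ) - a i / (2:ℝ)^j) := by
      show (2:ℝ)^j * (z i : ℝ) - a i = _
      rw [hzdef]
      field_simp
    rw [heq, abs_mul, abs_of_pos h2, abs_sub_comm]
    calc (2:ℝ)^j * |a i / (2:ℝ)^j - (round (a i / (2:ℝ)^j) : ℝ)|
        ≤ (2:ℝ)^j * (1/2) := mul_le_mul_of_nonneg_left (abs_sub_round _) h2.le
      _ = (2:ℝ)^j / 2 := by ring
  have hA1 : (1:ℝ)/2 ≤ feat n A (j, z) := by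
    have hinf : infDist (latpt n j z) A ≤ (2:ℝ)^j / 2 :=
      le_trans (infDist_le_dist_of_mem ha) hd
    have hmax : (2:ℝ)^j / 2 ≤ max 0 ((2:ℝ)^j - infDist (latpt n j z) A) :=
      le_trans (by linarith) (le_max_right _ _)
    have := mul_le_mul_of_nonneg_left hmax (inv_nonneg.mpr h2.le)
    calc (1:ℝ)/2 = ((2:ℝ)^j)⁻¹ * ((2:ℝ)^j / 2) := by field_simp
      _ ≤ feat n A (j, z) := this
  have hB0 : feat n B (j, z) = 0 := by
    have h4 : infDist a B ≤ infDist (latpt n j z) B + dist a (latpt n j z) :=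
      infDist_le_infDist_add_dist
    have hda : dist a (latpt n j z) ≤ (2:ℝ)^j / 2 := by rw [dist_comm]; exact hd
    have hpow : (2:ℝ)^(j+2) = (2:ℝ)^j * 4 := by rw [pow_add]; norm_num
    have hinfB : (2:ℝ)^j ≤ infDist (latpt n j z) B := by
      rw [hpow] at hfar
      linarith
    rw [feat]
    simp only
    rw [max_eq_left (by linarith), mul_zero]
  refine ⟨z, ?_⟩
  rw [gfun, hB0, sub_zero]
  calc (1:ℝ)/4 = (1/2)^2 := by norm_num
    _ ≤ feat n A (j, z) ^ 2 := pow_le_pow_left₀ (by norm_num) hA1 2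

theorem tsum_gfun_lower {n : ℕ} (A B : Finset (E n)) (hA : A.Nonempty) (hB : B.Nonempty)
    (M : ℕ) (hM : (2:ℝ)^(M+2) < hausdorffDist (↑A : Set (E n)) ↑B) :
    ((M : ℝ) + 1) * (1/4) ≤ ∑' c, gfun n ↑A ↑B c := by
  classical
  have hsum := (gfun_summable_and_bound A B hA hB).1
  have hj : ∀ j : ℕ, j < M + 1 → ∃ z, (1:ℝ)/4 ≤ gfun n ↑A ↑B (j, z) := by
    intro j hjM
    have hrlt : (2:ℝ)^(j+2) < hausdorffDist (↑A : Set (E n)) ↑B :=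
      lt_of_le_of_lt (pow_le_pow_right₀ one_le_two (by omega)) hM
    have hfar : (∃ x ∈ (↑A : Set (E n)), (2:ℝ)^(j+2) < infDist x ↑B) ∨
        (∃ y ∈ (↑B : Set (E n)), (2:ℝ)^(j+2) < infDist y ↑A) := by
      by_contra hcon
      push_neg at hcon
      exact absurd (hausdorffDist_le_of_infDist (by positivity) hcon.1 hcon.2)
        (not_le.mpr hrlt)
    rcases hfar with ⟨a, ha, haf⟩ | ⟨b, hb, hbf⟩
    · exact feat_far ha haf
    · obtain ⟨z, hz⟩ := feat_far hb hbf
      exact ⟨z, by rwa [gfun_comm]⟩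
  choose zf hzf using hj
  set zf' : ℕ → (Idx n → ℤ) := fun j => if h : j < M + 1 then zf j h else fun _ => 0 with hzf'
  set t : Finset (ℕ × (Idx n → ℤ)) :=
    (Finset.range (M+1)).image (fun j => (j, zf' j)) with ht
  have hinj : ∀ x ∈ Finset.range (M+1), ∀ y ∈ Finset.range (M+1),
      (x, zf' x) = (y, zf' y) → x = y := fun x _ y _ h => congrArg Prod.fst h
  calc ((M : ℝ) + 1) * (1/4) = ∑ _j ∈ Finset.range (M+1), (1/4 : ℝ) := by
        rw [Finset.sum_const, Finset.card_range, nsmul_eq_mul]; push_cast; ring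
    _ ≤ ∑ j ∈ Finset.range (M+1), gfun n ↑A ↑B (j, zf' j) := by
        refine Finset.sum_le_sum fun j hjm => ?_
        rw [Finset.mem_range] at hjm
        rw [hzf']
        simp only [dif_pos hjm]
        exact hzf j hjm
    _ = ∑ c ∈ t, gfun n ↑A ↑B c := (Finset.sum_image hinj).symm
    _ ≤ ∑' c, gfun n ↑A ↑B c := Summable.sum_le_tsum t (fun c _ => gfun_nonneg _ _ c) hsum


end GHEmbedAux

open GHEmbedAux Metric Set GromovHausdorff
open scoped ENNReal NNReal

/-- The space `𝒢ℋ^{≤ n}` of isometry classes of (nonempty) metric spaces with at most `n`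
points, with the Gromov–Hausdorff distance, coarsely embeds into the Hilbert space `ℓ²`
of square-summable real sequences. -/
theorem GH_le_n_coarsely_embeds_l2 (n : ℕ) (hn : 1 ≤ n) :
    ∃ ψ : {p : GromovHausdorff.GHSpace // Finite p.Rep ∧ Nat.card p.Rep ≤ n} →
      lp (fun _ : ℕ => ℝ) 2, CoarseEmbedding ψ := by
  classical
  have hn0 : 0 < n := hn
  -- an enumeration of the coordinate set
  haveI : Infinite (Idx n → ℤ) :=
    Infinite.of_injective (fun t : ℤ => (fun _ => t : Idx n → ℤ))
      (fun s t h => congrFun h (Sum.inr ()))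
  obtain ⟨den⟩ := nonempty_denumerable (ℕ × (Idx n → ℤ))
  let eqv : ℕ ≃ ℕ × (Idx n → ℤ) := (@Denumerable.eqv (ℕ × (Idx n → ℤ)) den).symm
  -- the invariant finite sets
  have hKfin : ∀ p : {p : GromovHausdorff.GHSpace // Finite p.Rep ∧ Nat.card p.Rep ≤ n},
      (KSet n p.1.Rep).Finite := by
    intro p
    haveI := p.2.1
    exact Set.finite_range _
  set S : {p : GromovHausdorff.GHSpace // Finite p.Rep ∧ Nat.card p.Rep ≤ n} → Finset (E n) :=
    fun p => (hKfin p).toFinset with hSdef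
  have hScoe : ∀ p, ↑(S p) = KSet n p.1.Rep := fun p => (hKfin p).coe_toFinset
  have hSne : ∀ p, (S p).Nonempty := by
    intro p
    rw [← Finset.coe_nonempty, hScoe]
    exact KSet_nonempty n _
  have hScard : ∀ p, (S p).card ≤ n ^ n := by
    intro p
    haveI := p.2.1
    calc (S p).card = (KSet n p.1.Rep).ncard := (Set.ncard_eq_toFinset_card _ (hKfin p)).symm
      _ ≤ (Set.univ : Set (Fin n → p.1.Rep)).ncard := by
          rw [KSet, ← Set.image_univ]
          exact Set.ncard_image_le Set.finite_univ
      _ = Nat.card (Fin n → p.1.Rep) := Set.ncard_univ _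
      _ = Nat.card p.1.Rep ^ n := by
          rw [Nat.card_fun]
          congr 1
          rw [Nat.card_eq_fintype_card, Fintype.card_fin]
      _ ≤ n ^ n := Nat.pow_le_pow_left p.2.2 n
  set S0 : Finset (E n) := {0} with hS0def
  have hS0ne : S0.Nonempty := ⟨0, Finset.mem_singleton_self 0⟩
  have hS0card : S0.card ≤ n ^ n := by
    rw [hS0def, Finset.card_singleton]
    exact Nat.one_le_pow _ _ hn0
  -- helper for converting norms
  have habs2 : ∀ x : ℝ, ‖x‖ ^ (2 : ℝ≥0∞).toReal = x ^ 2 := by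
    intro x
    rw [ENNReal.toReal_ofNat, Real.norm_eq_abs, show ((2:ℝ)) = ((2:ℕ):ℝ) by norm_num,
      Real.rpow_natCast, sq_abs]
  -- the embedding
  have hmem : ∀ p : {p : GromovHausdorff.GHSpace // Finite p.Rep ∧ Nat.card p.Rep ≤ n},
      Memℓp (fun k => feat n ↑(S p) (eqv k) - feat n (↑S0 : Set (E n)) (eqv k)) 2 := by
    intro p
    apply memℓp_gen
    have h1 : Summable (gfun n ↑(S p) ↑S0) :=
      (gfun_summable_and_bound (S p) S0 (hSne p) hS0ne).1
    have h2 : Summable (fun k => gfun n ↑(S p) ↑S0 (eqv k)) :=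
      (eqv.summable_iff (f := gfun n ↑(S p) ↑S0)).mpr h1
    refine Summable.congr h2 fun k => ?_
    rw [habs2, gfun]
  set ψ : {p : GromovHausdorff.GHSpace // Finite p.Rep ∧ Nat.card p.Rep ≤ n} →
      lp (fun _ : ℕ => ℝ) 2 :=
    fun p => ⟨fun k => feat n ↑(S p) (eqv k) - feat n (↑S0 : Set (E n)) (eqv k), hmem p⟩
    with hψdef
  -- squared distance identity
  have hdist2 : ∀ p q, dist (ψ p) (ψ q) ^ 2 = ∑' c, gfun n ↑(S p) ↑(S q) c := by
    intro p q
    rw [dist_eq_norm]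
    have hnorm := lp.norm_rpow_eq_tsum (p := 2) (by norm_num) (ψ p - ψ q)
    have hpow : ‖ψ p - ψ q‖ ^ (2 : ℝ≥0∞).toReal = ‖ψ p - ψ q‖ ^ 2 := by
      rw [ENNReal.toReal_ofNat, show ((2:ℝ)) = ((2:ℕ):ℝ) by norm_num, Real.rpow_natCast]
    rw [← hpow, hnorm]
    have hterm : ∀ k, ‖(ψ p - ψ q : lp (fun _ : ℕ => ℝ) 2) k‖ ^ (2 : ℝ≥0∞).toReal
        = gfun n ↑(S p) ↑(S q) (eqv k) := by
      intro k
      have hco : (ψ p - ψ q : lp (fun _ : ℕ => ℝ) 2) k = ψ p k - ψ q k := by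
        rw [lp.coeFn_sub]; rfl
      rw [hco, habs2, gfun]
      have : (ψ p) k - (ψ q) k
          = feat n ↑(S p) (eqv k) - feat n ↑(S q) (eqv k) := by
        show (feat n ↑(S p) (eqv k) - feat n (↑S0 : Set (E n)) (eqv k))
          - (feat n ↑(S q) (eqv k) - feat n (↑S0 : Set (E n)) (eqv k)) = _
        ring
      rw [this]
    calc ∑' k, ‖(ψ p - ψ q : lp (fun _ : ℕ => ℝ) 2) k‖ ^ (2 : ℝ≥0∞).toReal
        = ∑' k, gfun n ↑(S p) ↑(S q) (eqv k) := tsum_congr hterm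
      _ = ∑' c, gfun n ↑(S p) ↑(S q) c := eqv.tsum_eq _
  -- relations between distances
  set C : ℝ := (((n^n + n^n) * 3^(n*n+1) : ℕ) : ℝ) with hCdef
  have hC0 : 0 ≤ C := Nat.cast_nonneg _
  have hGH : ∀ p q : {p : GromovHausdorff.GHSpace // Finite p.Rep ∧ Nat.card p.Rep ≤ n},
      dist p q = GromovHausdorff.ghDist p.1.Rep q.1.Rep := by
    intro p q
    rw [Subtype.dist_eq, GromovHausdorff.dist_ghDist]
  have hupper : ∀ p q, dist (ψ p) (ψ q) ^ 2 ≤ 4 * C * dist p q := by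
    intro p q
    have hδ : hausdorffDist (↑(S p) : Set (E n)) ↑(S q) ≤ 2 * dist p q := by
      rw [hScoe, hScoe, hGH]
      exact hausdorffDist_KSet_le hn0 _ _
    have hbd := (gfun_summable_and_bound (S p) (S q) (hSne p) (hSne q)).2
    have hcast : ((((S p).card + (S q).card) * 3^(n*n+1) : ℕ) : ℝ) ≤ C := by
      rw [hCdef]
      exact_mod_cast Nat.mul_le_mul_right _ (Nat.add_le_add (hScard p) (hScard q))
    have hδ0 : (0:ℝ) ≤ hausdorffDist (↑(S p) : Set (E n)) ↑(S q) := hausdorffDist_nonneg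
    rw [hdist2]
    calc ∑' c, gfun n ↑(S p) ↑(S q) c
        ≤ ((((S p).card + (S q).card) * 3^(n*n+1) : ℕ) : ℝ)
            * hausdorffDist (↑(S p) : Set (E n)) ↑(S q) * 2 := hbd
      _ ≤ C * (2 * dist p q) * 2 := by
          refine mul_le_mul_of_nonneg_right ?_ (by norm_num)
          exact mul_le_mul hcast hδ hδ0 hC0
      _ = 4 * C * dist p q := by ring
  have hlower : ∀ p q, dist p q ≤ 5/2 * hausdorffDist (↑(S p) : Set (E n)) ↑(S q) := by
    intro p q
    rw [hScoe, hScoe, hGH]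
    haveI := p.2.1
    exact ghDist_le_KSet' hn0 _ _ p.2.2
  -- the control functions
  refine ⟨ψ, fun t => (1/2) * Real.sqrt (Real.logb 2 (t/20)),
    fun t => Real.sqrt (4 * C * t), ?_, ?_⟩
  · -- tendsto
    have hlog : Tendsto (fun t : ℝ => Real.logb 2 (t/20)) atTop atTop :=
      (Real.tendsto_logb_atTop one_lt_two).comp (tendsto_id.atTop_div_const (by norm_num))
    have hsqrt : Tendsto Real.sqrt atTop atTop := by
      rw [show Real.sqrt = fun x : ℝ => x ^ ((1:ℝ)/2) from funext Real.sqrt_eq_rpow]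
      exact tendsto_rpow_atTop (by norm_num)
    exact Tendsto.const_mul_atTop (by norm_num) (hsqrt.comp hlog)
  · intro p q
    constructor
    · -- lower bound
      by_cases ht : dist p q ≤ 20
      · show (1/2) * Real.sqrt (Real.logb 2 (dist p q / 20)) ≤ dist (ψ p) (ψ q)
        have hlb : Real.logb 2 (dist p q / 20) ≤ 0 :=
          Real.logb_nonpos one_lt_two (div_nonneg dist_nonneg (by norm_num))
            (by rw [div_le_one (by norm_num : (0:ℝ) < 20)]; linarith)
        rw [Real.sqrt_eq_zero'.mpr hlb, mul_zero]
        exact dist_nonneg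
      · push_neg at ht
        show (1/2) * Real.sqrt (Real.logb 2 (dist p q / 20)) ≤ dist (ψ p) (ψ q)
        set L := Real.logb 2 (dist p q / 20) with hLdef
        have hL0 : 0 < L := Real.logb_pos one_lt_two (by rw [lt_div_iff₀ (by norm_num : (0:ℝ) < 20)]; linarith)
        set M := Nat.floor L with hMdef
        have hδlow : 2/5 * dist p q ≤ hausdorffDist (↑(S p) : Set (E n)) ↑(S q) := by
          have := hlower p q
          linarith
        have h2M : (2:ℝ)^(M+2) < hausdorffDist (↑(S p) : Set (E n)) ↑(S q) := by
          have h2ML : (2:ℝ)^M ≤ dist p q / 20 := by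
            calc (2:ℝ)^M = (2:ℝ) ^ ((M:ℝ)) := (Real.rpow_natCast 2 M).symm
              _ ≤ (2:ℝ) ^ L := by
                  rw [Real.rpow_le_rpow_left_iff one_lt_two]
                  exact Nat.floor_le hL0.le
              _ = dist p q / 20 := Real.rpow_logb (by norm_num) (by norm_num)
                  (by positivity)
          have hpq : (0:ℝ) < dist p q := by linarith
          calc (2:ℝ)^(M+2) = (2:ℝ)^M * 4 := by rw [pow_add]; norm_num
            _ ≤ (dist p q / 20) * 4 := by linarith
            _ < 2/5 * dist p q := by linarith
            _ ≤ _ := hδlow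
        have hlow := tsum_gfun_lower (S p) (S q) (hSne p) (hSne q) M h2M
        rw [← hdist2] at hlow
        have hLM : L ≤ (M : ℝ) + 1 := (Nat.lt_floor_add_one L).le
        have hsq : (1/2) * Real.sqrt L = Real.sqrt (L / 4) := by
          rw [show L/4 = (1/4) * L by ring, Real.sqrt_mul (by norm_num) L,
            show Real.sqrt (1/4) = 1/2 by
              rw [show (1/4:ℝ) = (1/2)^2 by norm_num, Real.sqrt_sq (by norm_num)]]
        rw [hsq]
        calc Real.sqrt (L / 4) ≤ Real.sqrt (dist (ψ p) (ψ q) ^ 2) :=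
              Real.sqrt_le_sqrt (by linarith)
          _ = dist (ψ p) (ψ q) := Real.sqrt_sq dist_nonneg
    · -- upper bound
      calc dist (ψ p) (ψ q) = Real.sqrt (dist (ψ p) (ψ q) ^ 2) :=
            (Real.sqrt_sq dist_nonneg).symm
        _ ≤ Real.sqrt (4 * C * dist p q) := Real.sqrt_le_sqrt (hupper p q)
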